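/- Let G be a finite group that is a direct product G = H × K with |H| = |K| = m ≥ 3. Then G is not a B-group: there exists a primitive permutation group of degree m² containing a regular subgroup isomorphic to G which is not 2-transitive. -/

import Mathlib

open Equiv MulAction Pointwise

section Grid

variable (m : ℕ)

/-- The grid. -/
def gridEquiv : Fin m × Fin m ≃ Fin (m ^ 2) :=
  finProdFinEquiv.trans (finCongr (pow_two m).symm)

/-- Rook's-graph relation: same row or same column. -/
def gridRel (x y : Fin (m ^ 2)) : Prop :=
  ((gridEquiv m).symm x).1 = ((gridEquiv m).symm y).1 ∨
    ((gridEquiv m).symm x).2 = ((gridEquiv m).symm y).2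

/-- The automorphism group of the rook's graph. -/
def gridAut : Subgroup (Perm (Fin (m ^ 2))) where
  carrier := {σ | ∀ x y, gridRel m x y ↔ gridRel m (σ x) (σ y)}
  one_mem' := by intro x y; simp
  mul_mem' := by intro a b ha hb x y; exact (hb x y).trans (ha _ _)
  inv_mem' := by
    intro σ h x y
    have := h (σ⁻¹ x) (σ⁻¹ y)
    simp only [Perm.inv_def, Equiv.apply_symm_apply] at this
    exact this.symm

/-- Transport a permutation of the square to the grid. -/
def toGrid (f : Perm (Fin m × Fin m)) : Perm (Fin (m ^ 2)) := (gridEquiv m).permCongr f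

lemma symm_toGrid (f : Perm (Fin m × Fin m)) (x : Fin (m ^ 2)) :
    (gridEquiv m).symm (toGrid m f x) = f ((gridEquiv m).symm x) := by
  simp [toGrid]

lemma prod_mem_gridAut (σ τ : Perm (Fin m)) : toGrid m (Equiv.prodCongr σ τ) ∈ gridAut m := by
  intro x y
  unfold gridRel
  rw [symm_toGrid, symm_toGrid]
  simp [σ.injective.eq_iff, τ.injective.eq_iff]

lemma flip_mem_gridAut (σ τ : Perm (Fin m)) :
    toGrid m ((Equiv.prodComm _ _).trans (Equiv.prodCongr σ τ)) ∈ gridAut m := by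
  intro x y
  unfold gridRel
  rw [symm_toGrid, symm_toGrid]
  simp [σ.injective.eq_iff, τ.injective.eq_iff, or_comm]

lemma exists_ne_ne (hm : 3 ≤ m) (b d : Fin m) : ∃ z : Fin m, z ≠ b ∧ z ≠ d := by
  by_contra h
  push_neg at h
  have hsub : (Finset.univ : Finset (Fin m)) ⊆ {b, d} := by
    intro z _
    rcases eq_or_ne z b with h1 | h1
    · simp [h1]
    · simp [h z h1]
  have := Finset.card_le_card hsub
  have h2 : ({b, d} : Finset (Fin m)).card ≤ 2 := Finset.card_insert_le _ _ |>.trans (by simp)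
  simp [Finset.card_univ] at this
  omega

lemma block_step {m : ℕ} {B : Set (Fin (m ^ 2))} (hB : IsBlock (gridAut m) B)
    {g : Perm (Fin (m ^ 2))} (hg : g ∈ gridAut m) {z : Fin (m ^ 2)} (hz : z ∈ B)
    (hgz : g z = z) {w : Fin (m ^ 2)} (hw : w ∈ B) : g w ∈ B := by
  have h1 : (⟨g, hg⟩ : gridAut m) • z ∈ B := by
    simpa [Subgroup.smul_def, Equiv.Perm.smul_def, hgz] using hz
  have h2 := hB.smul_eq_of_mem hz h1
  have : (⟨g, hg⟩ : gridAut m) • w ∈ (⟨g, hg⟩ : gridAut m) • B := Set.smul_mem_smul_set hw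
  rw [h2] at this
  simpa [Subgroup.smul_def, Equiv.Perm.smul_def] using this

lemma block_univ {m : ℕ} (hm : 3 ≤ m) {B : Set (Fin (m ^ 2))}
    (hB : IsBlock (gridAut m) B) {x y : Fin (m ^ 2)} (hx : x ∈ B) (hy : y ∈ B)
    (hxy : x ≠ y) : B = Set.univ := by
  set E := gridEquiv m with hE
  -- key: two distinct points in a common row force B = univ
  have key : ∀ a b b' : Fin m, b ≠ b' → E (a, b) ∈ B → E (a, b') ∈ B → B = Set.univ := by
    intro a b b' hbb' h1 h2
    -- whole row a is in B
    have row : ∀ d : Fin m, E (a, d) ∈ B := by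
      intro d
      rcases eq_or_ne d b with rfl | hdb
      · exact h1
      rcases eq_or_ne d b' with rfl | hdb'
      · exact h2
      have hg := prod_mem_gridAut m 1 (Equiv.swap b' d)
      have hfix : toGrid m (Equiv.prodCongr 1 (Equiv.swap b' d)) (E (a, b)) = E (a, b) := by
        apply E.symm.injective
        rw [symm_toGrid]
        simp [hE, Equiv.swap_apply_of_ne_of_ne hbb' (Ne.symm hdb)]
      have := block_step hB hg h1 hfix h2
      have hmap : toGrid m (Equiv.prodCongr 1 (Equiv.swap b' d)) (E (a, b')) = E (a, d) := by
        apply E.symm.injective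
        rw [symm_toGrid]
        simp [hE]
      rwa [hmap] at this
    ext z
    simp only [Set.mem_univ, iff_true]
    set u := (E.symm z).1 with hu
    set v := (E.symm z).2 with hv
    have hz : z = E (u, v) := by rw [hu, hv]; simp
    set σ := Equiv.swap v a with hσ
    set τ := Equiv.swap a v with hτ
    have hg := flip_mem_gridAut m σ τ
    set f := (Equiv.prodComm (Fin m) (Fin m)).trans (Equiv.prodCongr σ τ) with hf
    have hfix : toGrid m f (E (a, v)) = E (a, v) := by
      apply E.symm.injective
      rw [symm_toGrid]
      simp [hE, hf, hσ, hτ, Equiv.swap_apply_right, Equiv.swap_apply_left]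
    have hmem := block_step hB hg (row v) hfix (row (σ u))
    have hmap : toGrid m f (E (a, σ u)) = z := by
      apply E.symm.injective
      rw [symm_toGrid, hz]
      simp [hE, hf, hσ, hτ, Equiv.swap_apply_left, Equiv.swap_apply_self]
    rwa [hmap] at hmem
  -- now case analysis on coordinates of x and y
  obtain ⟨⟨a, b⟩, rfl⟩ : ∃ p, x = E p := ⟨E.symm x, (E.apply_symm_apply x).symm⟩
  obtain ⟨⟨c, d⟩, rfl⟩ : ∃ p, y = E p := ⟨E.symm y, (E.apply_symm_apply y).symm⟩
  have hxe : E (a, b) = E (a, b) := rfl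
  have hye : E (c, d) = E (c, d) := rfl
  rcases eq_or_ne a c with rfl | hac
  · -- same row
    have hbd : b ≠ d := by
      intro h; apply hxy; rw [h]
    exact key a b d hbd hx hy
  rcases eq_or_ne b d with rfl | hbd
  · -- same column: use a flip fixing x to move y into row a
    set σ := Equiv.swap b a with hσ
    set τ := Equiv.swap a b with hτ
    have hg := flip_mem_gridAut m σ τ
    set f := (Equiv.prodComm (Fin m) (Fin m)).trans (Equiv.prodCongr σ τ) with hf
    have hfix : toGrid m f (E (a, b)) = E (a, b) := by
      apply E.symm.injective
      rw [symm_toGrid]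
      simp [hE, hf, hσ, hτ, Equiv.swap_apply_left, Equiv.swap_apply_right]
    have hmem := block_step hB hg hx hfix hy
    have hmap : toGrid m f (E (c, b)) = E (a, τ c) := by
      apply E.symm.injective
      rw [symm_toGrid]
      simp [hE, hf, hσ, hτ, Equiv.swap_apply_left]
    rw [hmap] at hmem
    have hne : b ≠ τ c := by
      intro h
      apply hac
      have : τ b = τ (τ c) := by rw [← h]
      simp [hτ, Equiv.swap_apply_left, Equiv.swap_apply_self] at this
      exact this.symm ▸ rfl
    exact key a b (τ c) hne hx hmem
  · -- different row and column
    obtain ⟨d', hd'd, hd'b⟩ := exists_ne_ne m hm d b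
    have hg := prod_mem_gridAut m 1 (Equiv.swap d d')
    have hfix : toGrid m (Equiv.prodCongr 1 (Equiv.swap d d')) (E (a, b)) = E (a, b) := by
      apply E.symm.injective
      rw [symm_toGrid]
      simp [hE, Equiv.swap_apply_of_ne_of_ne hbd (Ne.symm hd'b)]
    have hmem := block_step hB hg hx hfix hy
    have hmap : toGrid m (Equiv.prodCongr 1 (Equiv.swap d d')) (E (c, d)) = E (c, d') := by
      apply E.symm.injective
      rw [symm_toGrid]
      simp [hE]
    rw [hmap] at hmem
    exact key c d d' (Ne.symm hd'd) hy hmem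

end Grid

/-- `Equiv.permCongr` as a `MulEquiv`. -/
def permCongrMulEquiv {α β : Type*} (e : α ≃ β) : Perm α ≃* Perm β :=
  { e.permCongr with
    map_mul' := fun f g => by ext x; simp [Equiv.permCongr_apply] }

/-- A permutation group (as a group acting on `Ω`) is 2-transitive. -/
def IsDoublyTransitive (K Ω : Type*) [Group K] [MulAction K Ω] : Prop :=
  ∀ a b c d : Ω, a ≠ b → c ≠ d → ∃ g : K, g • a = c ∧ g • b = d

/-- Primitive: transitive and every block is trivial. -/
def IsPrimitivePermGroup (K Ω : Type*) [Group K] [MulAction K Ω] : Prop :=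
  MulAction.IsPretransitive K Ω ∧
    ∀ B : Set Ω, MulAction.IsBlock K B → MulAction.IsTrivialBlock B

theorem stmt_10 (H K : Type*) [Group H] [Group K] [Fintype H] [Fintype K]
    (m : ℕ) (hm : 3 ≤ m) (hH : Fintype.card H = m) (hK : Fintype.card K = m) :
    ∃ P : Subgroup (Equiv.Perm (Fin (m ^ 2))),
      IsPrimitivePermGroup P (Fin (m ^ 2)) ∧
      (∃ L : Subgroup (Equiv.Perm (Fin (m ^ 2))), L ≤ P ∧
        (∀ x y : Fin (m ^ 2), ∃! g : L, (g : Equiv.Perm (Fin (m ^ 2))) x = y) ∧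
        Nonempty (L ≃* (H × K))) ∧
      ¬ IsDoublyTransitive P (Fin (m ^ 2)) := by
  set E := gridEquiv m with hE
  refine ⟨gridAut m, ⟨?_, ?_⟩, ?_, ?_⟩
  all_goals try unfold IsDoublyTransitive
  · -- transitivity
    constructor
    intro x y
    refine ⟨⟨toGrid m (Equiv.prodCongr (Equiv.swap (E.symm x).1 (E.symm y).1)
      (Equiv.swap (E.symm x).2 (E.symm y).2)), prod_mem_gridAut m _ _⟩, ?_⟩
    show toGrid m _ x = y
    apply E.symm.injective
    rw [symm_toGrid]
    ext <;> simp [hE, Equiv.swap_apply_left]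
  · -- blocks are trivial
    intro B hB
    by_cases hs : B.Subsingleton
    · exact Or.inl hs
    · right
      rw [Set.not_subsingleton_iff] at hs
      obtain ⟨x, hx, y, hy, hxy⟩ := hs
      exact block_univ hm hB hx hy hxy
  · -- regular subgroup
    let qH : H ≃ Fin m := Fintype.equivFinOfCardEq hH
    let qK : K ≃ Fin m := Fintype.equivFinOfCardEq hK
    let EG : (H × K) ≃ Fin (m ^ 2) := (qH.prodCongr qK).trans E
    let φ : (H × K) →* Perm (Fin (m ^ 2)) :=
      (permCongrMulEquiv EG).toMonoidHom.comp (MulAction.toPermHom (H × K) (H × K))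
    have hφ : ∀ (g : H × K) (x : Fin (m ^ 2)), φ g x = EG (g * EG.symm x) := by
      intro g x
      simp [φ, permCongrMulEquiv, Equiv.permCongr_apply, MulAction.toPermHom_apply,
        smul_eq_mul]
    refine ⟨φ.range, ?_, ?_, ?_⟩
    · rintro σ ⟨g, rfl⟩
      intro x y
      have hcoord : ∀ z : Fin (m ^ 2), E.symm (φ g z) =
          (qH (g.1 * qH.symm (E.symm z).1), qK (g.2 * qK.symm (E.symm z).2)) := by
        intro z
        rw [hφ]
        simp [EG, Prod.ext_iff, Prod.fst_mul, Prod.snd_mul]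
      unfold gridRel
      rw [hcoord, hcoord, ← hE]
      simp only [qH.injective.eq_iff, qK.injective.eq_iff, mul_right_cancel_iff,
        mul_left_cancel_iff, qH.symm.injective.eq_iff, qK.symm.injective.eq_iff]
    · intro x y
      refine ⟨⟨φ (EG.symm y * (EG.symm x)⁻¹), ⟨_, rfl⟩⟩, ?_, ?_⟩
      · show φ _ x = y
        rw [hφ, inv_mul_cancel_right]
        simp
      · rintro ⟨w, g, rfl⟩ hw
        have hw' : φ g x = y := hw
        rw [hφ] at hw'
        have : g * EG.symm x = EG.symm y := by
          apply EG.injective; rw [hw']; simp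
        have hg : g = EG.symm y * (EG.symm x)⁻¹ := by
          rw [← this, mul_inv_cancel_right]
        exact Subtype.ext (by rw [hg])
    · have hinj : Function.Injective φ := by
        intro a b hab
        have h1 := congrArg (fun f : Perm (Fin (m ^ 2)) => EG.symm (f (EG (1 : H × K)))) hab
        simpa [hφ] using h1
      exact ⟨(MonoidHom.ofInjective hinj).symm⟩
  · -- not doubly transitive
    intro h2
    have h0 : (0 : ℕ) < m := by omega
    have h1 : (1 : ℕ) < m := by omega
    set z0 : Fin m := ⟨0, h0⟩
    set z1 : Fin m := ⟨1, h1⟩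
    have hz01 : z0 ≠ z1 := by simp [z0, z1, Fin.ext_iff]
    have hab : E (z0, z0) ≠ E (z0, z1) := by
      simp [E.injective.eq_iff, Prod.ext_iff, hz01]
    have hac : E (z0, z0) ≠ E (z1, z1) := by
      simp [E.injective.eq_iff, Prod.ext_iff, hz01]
    obtain ⟨g, hg1, hg2⟩ := h2 (E (z0, z0)) (E (z0, z1)) (E (z0, z0)) (E (z1, z1)) hab hac
    have hrel : gridRel m (E (z0, z0)) (E (z0, z1)) := by
      left; simp [gridRel, hE]
    have := (g.2 (E (z0, z0)) (E (z0, z1))).mp hrel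
    have hga : (g : Perm (Fin (m ^ 2))) (E (z0, z0)) = E (z0, z0) := hg1
    have hgb : (g : Perm (Fin (m ^ 2))) (E (z0, z1)) = E (z1, z1) := hg2
    rw [hga, hgb] at this
    rcases this with h | h <;> simp [gridRel, hE, hz01] at h
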